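/- Structure of supports of cocycles within a simplex. Let j ∈ {1,…,d−1}, let f be a j-cocycle in a d-complex G with support S, let k satisfy j+1 ≤ k ≤ d, let K be a k-simplex of G, and let S_K denote the set of j-simplices of S contained in K. Then: (i) either S_K = ∅, or |S_K| ≥ k−j+1 and the union of the elements of S_K equals K; (ii) if |S_K| = k−j+1, then S_K forms a j-flower in K, i.e. S_K = F(K,C) for some j-set C ⊂ K. -/
import Mathlib


open MeasureTheory Filter Finset Asymptotics
open scoped Classical

noncomputable section

namespace RSC

/-! ### Simplicial complexes on the vertex set `Fin N` -/

variable {N : ℕ}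

/-- A simplicial complex on `[N]`: a downward-closed family of non-empty finite
subsets of the vertex set containing all singletons. -/
def IsComplex (G : Set (Finset (Fin N))) : Prop :=
  (∀ A ∈ G, A.Nonempty) ∧ (∀ v : Fin N, ({v} : Finset (Fin N)) ∈ G) ∧
    ∀ A ∈ G, ∀ B : Finset (Fin N), B ⊆ A → B.Nonempty → B ∈ G

/-- A `d`-dimensional simplicial complex: no `(d+1)`-simplices, i.e. all faces have
at most `d+1` vertices. -/
def IsDComplex (d : ℕ) (G : Set (Finset (Fin N))) : Prop :=
  IsComplex G ∧ ∀ A ∈ G, A.card ≤ d + 1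

/-- `σ` is an ordered simplex of `G` (on `m` vertices, i.e. of dimension `m-1`). -/
def OrdSimp (G : Set (Finset (Fin N))) {m : ℕ} (σ : Fin m → Fin N) : Prop :=
  Function.Injective σ ∧ Finset.image σ Finset.univ ∈ G

/-- An `(m-1)`-dimensional cochain of `G` with coefficients in `R`: a function on
ordered `m`-tuples vanishing off the ordered simplices of `G` and changing sign
under transpositions of two vertices. -/
def IsCochain (G : Set (Finset (Fin N))) (m : ℕ) {R : Type} [AddCommGroup R]
    (f : (Fin m → Fin N) → R) : Prop :=
  (∀ σ : Fin m → Fin N, ¬ OrdSimp G σ → f σ = 0) ∧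
    ∀ (σ : Fin m → Fin N) (a b : Fin m), a ≠ b → f (σ ∘ Equiv.swap a b) = - f σ

/-- The coboundary of a function on ordered `m`-tuples. -/
def delta {R : Type} [AddCommGroup R] {m : ℕ} (g : (Fin m → Fin N) → R) :
    (Fin (m + 1) → Fin N) → R :=
  fun σ => ∑ i : Fin (m + 1), (-1 : ℤ) ^ (i : ℕ) • g (σ ∘ i.succAbove)

/-- An `(m-1)`-dimensional cocycle: a cochain whose coboundary vanishes on all
ordered `(m+1)`-tuples forming simplices of `G`. -/
def IsCocycle (G : Set (Finset (Fin N))) (m : ℕ) {R : Type} [AddCommGroup R]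
    (f : (Fin m → Fin N) → R) : Prop :=
  IsCochain G m f ∧ ∀ σ : Fin (m + 1) → Fin N, OrdSimp G σ → delta f σ = 0

/-- `f` (a function on ordered `(m+1)`-tuples) is an `m`-dimensional coboundary:
on the ordered simplices of `G` it agrees with the coboundary of an
`(m-1)`-dimensional cochain. -/
def IsCobound (G : Set (Finset (Fin N))) (m : ℕ) {R : Type} [AddCommGroup R]
    (f : (Fin (m + 1) → Fin N) → R) : Prop :=
  ∃ g : (Fin m → Fin N) → R, IsCochain G m g ∧
    ∀ σ : Fin (m + 1) → Fin N, OrdSimp G σ → f σ = delta g σ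

/-- The support of a cochain: the unordered simplices on which it does not vanish. -/
def cochainSupport {R : Type} [AddCommGroup R] {m : ℕ} (f : (Fin m → Fin N) → R) :
    Set (Finset (Fin N)) :=
  {A | ∃ σ : Fin m → Fin N, Function.Injective σ ∧ Finset.image σ Finset.univ = A ∧ f σ ≠ 0}

/-- `H^j(G;R) = 0`: every `j`-cocycle is a `j`-coboundary. -/
def HTrivial (G : Set (Finset (Fin N))) (R : Type) [AddCommGroup R] (j : ℕ) : Prop :=
  ∀ f : (Fin (j + 1) → Fin N) → R, IsCocycle G (j + 1) f → IsCobound G j f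

/-- Topological connectedness (equivalently `H^0(G;R) = R`): any two vertices are
joined by a sequence of vertices in which consecutive vertices share a simplex. -/
def TopConnected (G : Set (Finset (Fin N))) : Prop :=
  ∀ u v : Fin N, Relation.ReflTransGen (fun x y => ∃ A ∈ G, x ∈ A ∧ y ∈ A) u v

/-- `R`-cohomological `j`-connectedness: `H^0(G;R) = R` and `H^i(G;R) = 0` for
all `1 ≤ i ≤ j`. -/
def CohomConnected (G : Set (Finset (Fin N))) (R : Type) [AddCommGroup R] (j : ℕ) : Prop :=
  TopConnected G ∧ ∀ i : ℕ, 1 ≤ i → i ≤ j → HTrivial G R i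

/-- `A` is a `j`-shell of `G`: a `(j+2)`-set all of whose `(j+1)`-subsets are
`j`-simplices of `G`. -/
def IsShell (G : Set (Finset (Fin N))) (j : ℕ) (A : Finset (Fin N)) : Prop :=
  A.card = j + 2 ∧ ∀ B ⊆ A, B.card = j + 1 → B ∈ G

/-- The `j`-flower in `K` with centre `C`: the petals `C ∪ {w}`, `w ∈ K \ C`. -/
def flower (K C : Finset (Fin N)) : Set (Finset (Fin N)) :=
  {P | ∃ w ∈ K, w ∉ C ∧ P = insert w C}

/-- `(K, C)` is a copy of `M_{j,k}` in `G`. -/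
def IsCopyM (G : Set (Finset (Fin N))) (j k : ℕ) (K C : Finset (Fin N)) : Prop :=
  K ∈ G ∧ K.card = k + 1 ∧ C ⊆ K ∧ C.card = j ∧
    (∀ σ ∈ G, (∃ w ∈ K, w ∉ C ∧ insert w C ⊆ σ) → σ ⊆ K) ∧
    (k = j → ∀ x ∈ C, ∀ y ∈ K, y ∉ C → x < y)

/-- `(K, C, w, a)` is a copy of `M̂_{j,k}` in `G`. -/
def IsCopyMhat (G : Set (Finset (Fin N))) (j k : ℕ) (K C : Finset (Fin N)) (w a : Fin N) :
    Prop :=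
  IsCopyM G j k K C ∧ w ∈ K ∧ w ∉ C ∧ a ∉ K ∧
    IsShell G j (insert a (insert w C)) ∧ (k = j → ∀ x ∈ K, x ≤ w)

/-- `G + B`: adding the set `B` together with its downward closure to `G`. -/
def addSet (G : Set (Finset (Fin N))) (B : Finset (Fin N)) : Set (Finset (Fin N)) :=
  G ∪ {A | A.Nonempty ∧ A ⊆ B}

/-- `J` is `K`-localised: every simplex of `G` containing `J` is contained in `K`. -/
def KLocalised (G : Set (Finset (Fin N))) (K J : Finset (Fin N)) : Prop :=
  ∀ σ ∈ G, J ⊆ σ → σ ⊆ K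

/-- A `k`-simplex `K` is a local `j`-obstacle: it contains at least `k - j + 1`
many `K`-localised `j`-simplices. -/
def LocalObstacle (G : Set (Finset (Fin N))) (j k : ℕ) (K : Finset (Fin N)) : Prop :=
  K ∈ G ∧ K.card = k + 1 ∧
    k - j + 1 ≤ {J : Finset (Fin N) | J ⊆ K ∧ J.card = j + 1 ∧ J ∈ G ∧ KLocalised G K J}.ncard

/-- The number of copies of `M_{j,k}` in `G`. -/
def countM (j k : ℕ) (G : Set (Finset (Fin N))) : ℕ :=
  Set.ncard {KC : Finset (Fin N) × Finset (Fin N) | IsCopyM G j k KC.1 KC.2}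

/-! ### The random model: independent uniform birth times -/

/-- The sample space: a birth time for each set of vertices. -/
abbrev Omega (n : ℕ) : Type := Finset (Fin n) → ℝ

/-- The probability measure: independent `Uniform[0,1]` birth times. -/
def P (n : ℕ) : Measure (Omega n) :=
  Measure.pi fun _ => volume.restrict (Set.Icc (0 : ℝ) 1)

/-- An event holds with high probability. -/
def WHP (E : (n : ℕ) → Set (Omega n)) : Prop :=
  Tendsto (fun n => P n (E n)) atTop (nhds 1)

/-- The random `d`-complex determined by birth times `ω`: all singletons together
with the downward closure of all sets `K` with `2 ≤ |K| ≤ d+1` whose birth time is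
at most `p (|K| - 1)`; i.e. the downward closure of the non-uniform binomial
random hypergraph `G(n,p)`. -/
def birthComplex (d n : ℕ) (p : ℕ → ℝ) (ω : Omega n) : Set (Finset (Fin n)) :=
  {A | A.Nonempty ∧ (A.card = 1 ∨ ∃ K : Finset (Fin n),
    A ⊆ K ∧ 2 ≤ K.card ∧ K.card ≤ d + 1 ∧ ω K ≤ p (K.card - 1))}

/-- The process `𝒢_τ = 𝒢(n, τ p̄)`: the complex of all simplices with scaled birth
time at most `τ`. -/
def Gproc (d : ℕ) (p : ℕ → ℕ → ℝ) (n : ℕ) (τ : ℝ) (ω : Omega n) : Set (Finset (Fin n)) :=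
  birthComplex d n (fun k => τ * p n k) ω

/-- `G` contains a copy of `M̂_{j,k}` for some `j ≤ k ≤ d`. -/
def ContainsMhat (d j : ℕ) {n : ℕ} (G : Set (Finset (Fin n))) : Prop :=
  ∃ k, j ≤ k ∧ k ≤ d ∧ ∃ K C : Finset (Fin n), ∃ w a : Fin n, IsCopyMhat G j k K C w a

/-- The hitting time `τ_j^*` for the disappearance of the last minimal obstruction. -/
def tstar (d j : ℕ) (p : ℕ → ℕ → ℝ) (n : ℕ) (ω : Omega n) : ℝ :=
  sSup {τ : ℝ | 0 ≤ τ ∧ ContainsMhat d j (Gproc d p n τ ω)}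

/-! ### Directions and their parameters -/

/-- A direction `p̄` together with its parametrisation `ᾱ, β̄, γ̄`
(`p k n` is `p̄_k(n)`, `β n k` is `β̄_k(n)`). -/
structure DirData where
  p : ℕ → ℕ → ℝ
  α : ℕ → ℝ
  β : ℕ → ℕ → ℝ
  γ : ℕ → ℝ

/-- `j`-admissibility of a direction (Definition 2.3). -/
def IsAdmissible (d j : ℕ) (D : DirData) : Prop :=
  (∀ n k, 0 ≤ D.p n k) ∧
  (∀ k, 1 ≤ k → k ≤ d → ∀ n : ℕ,
    D.p n k = (D.α k * Real.log n + D.β n k) / (n : ℝ) ^ ((k : ℝ) - (j : ℝ) + D.γ k)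
      * (Nat.factorial (k - j) : ℝ)) ∧
  (∀ k, 1 ≤ k → k ≤ d → (D.α k = 0 ∨ D.γ k = 0) ∧ 0 ≤ D.α k ∧ 0 ≤ D.γ k) ∧
  (∀ k, 1 ≤ k → k ≤ d → D.α k = 0 →
    (∀ n, D.β n k = 0) ∨ ((∀ n, 0 < D.β n k) ∧ ∀ ε : ℝ, 0 < ε →
      ((fun n => D.β n k) =o[atTop] fun n : ℕ => (n : ℝ) ^ ε) ∧
      ((fun n : ℕ => (n : ℝ) ^ (-ε)) =o[atTop] fun n => D.β n k))) ∧
  (∀ k, 1 ≤ k → k ≤ d → D.γ k = 0 →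
    (fun n => |D.β n k|) =o[atTop] fun n : ℕ => Real.log n) ∧
  (∃ k, j + 1 ≤ k ∧ k ≤ d ∧ 0 < D.α k)

/-- `λ_k`, computed from parameter functions. -/
def lamP (d j : ℕ) (α γ : ℕ → ℝ) (k : ℕ) : ℝ :=
  (j : ℝ) + 1 - γ k - ((k : ℝ) - (j : ℝ) + 1) * ∑ i ∈ Finset.Icc (j + 1) d, α i

/-- `μ_k`, computed from parameter functions. -/
def muP (d j : ℕ) (α : ℕ → ℝ) (β : ℕ → ℕ → ℝ) (γ : ℕ → ℝ) (p : ℕ → ℕ → ℝ)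
    (n k : ℕ) : ℝ :=
  -(((k : ℝ) - (j : ℝ) + 1) * ∑ i ∈ Finset.Icc (j + 1) d, β n i / (n : ℝ) ^ (γ i)) +
    (if 1 < p n k then 0
     else if α k ≠ 0 then Real.log (Real.log n)
     else Real.log (β n k))

/-- `ν_k`, computed from parameter functions. -/
def nuP (j : ℕ) (α : ℕ → ℝ) (k : ℕ) : ℝ :=
  if k = j then -Real.log (Nat.factorial (j + 1) : ℝ)
  else if α k ≠ 0 then
    -Real.log (Nat.factorial j : ℝ) - Real.log ((k : ℝ) - (j : ℝ) + 1) + Real.log (α k)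
  else -Real.log (Nat.factorial j : ℝ) - Real.log ((k : ℝ) - (j : ℝ) + 1)

def DirData.lam (D : DirData) (d j k : ℕ) : ℝ := lamP d j D.α D.γ k

def DirData.mu (D : DirData) (d j : ℕ) (n k : ℕ) : ℝ := muP d j D.α D.β D.γ D.p n k

def DirData.nu (D : DirData) (j k : ℕ) : ℝ := nuP j D.α k

/-- A `j`-critical direction (Definition 2.4). -/
def IsCriticalDirection (d j : ℕ) (D : DirData) : Prop :=
  IsAdmissible d j D ∧
  (∀ k, j ≤ k → k ≤ d → (∃ n, D.p n k ≠ 0) →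
    ∀ᶠ n : ℕ in atTop, D.lam d j k * Real.log n + D.mu d j n k + D.nu j k ≤ 0) ∧
  ∃ k, j ≤ k ∧ k ≤ d ∧
    ∀ᶠ n : ℕ in atTop, D.lam d j k * Real.log n + D.mu d j n k + D.nu j k = 0

/-- `k` is a critical dimension of the `j`-critical direction `D`. -/
def IsCriticalDim (d j : ℕ) (D : DirData) (k : ℕ) : Prop :=
  j ≤ k ∧ k ≤ d ∧ (∃ n, D.p n k ≠ 0) ∧ D.lam d j k = 0 ∧
    (fun n => D.mu d j n k) =O[atTop] fun _ : ℕ => (1 : ℝ)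

/-- The quantity `ℰ = exp(-c(j+1)) ∑_{k ∈ 𝒞} exp(μ̄_k + ν̄_k + c γ̄_k)`. -/
def Ecal (d j : ℕ) (D : DirData) (c : ℝ) (n : ℕ) : ℝ :=
  Real.exp (-(c * ((j : ℝ) + 1))) *
    ∑ k ∈ Finset.Icc j d,
      if IsCriticalDim d j D k then Real.exp (D.mu d j n k + D.nu j k + c * D.γ k) else 0

/-- `q̄ = ∏_{k=j+1}^d (1 - p̄_k)^{binom(n-j-1, k-j)}`. -/
def qbar (d j : ℕ) (D : DirData) (n : ℕ) : ℝ :=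
  ∏ k ∈ Finset.Icc (j + 1) d, (1 - D.p n k) ^ (Nat.choose (n - j - 1) (k - j))

end RSC

end
namespace RSC

section Aux

variable {N : ℕ} {R : Type} [AddCommGroup R]

lemma cochain_perm {m : ℕ} {G : Set (Finset (Fin N))}
    {f : (Fin m → Fin N) → R} (hf : IsCochain G m f)
    (e : Equiv.Perm (Fin m)) :
    ∀ σ : Fin m → Fin N, f (σ ∘ e) = f σ ∨ f (σ ∘ e) = - f σ := by
  refine Equiv.Perm.swap_induction_on e ?_ ?_
  · intro σ; left; rfl
  · intro e x y hxy ih σ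
    have h1 : σ ∘ (Equiv.swap x y * e) = (σ ∘ Equiv.swap x y) ∘ e := rfl
    have h2 := ih (σ ∘ Equiv.swap x y)
    have h3 : f (σ ∘ Equiv.swap x y) = - f σ := hf.2 σ x y hxy
    rw [h1]
    rcases h2 with h | h
    · right; rw [h, h3]
    · left; rw [h, h3, neg_neg]

lemma support_ne_zero {m : ℕ} {G : Set (Finset (Fin N))}
    {f : (Fin m → Fin N) → R} (hf : IsCochain G m f)
    {A : Finset (Fin N)} (hA : A ∈ cochainSupport f)
    {τ : Fin m → Fin N} (hτ : Function.Injective τ)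
    (him : Finset.image τ Finset.univ = A) : f τ ≠ 0 := by
  obtain ⟨σ, hσinj, hσim, hσne⟩ := hA
  have himeq : Finset.image τ Finset.univ = Finset.image σ Finset.univ := by
    rw [him, hσim]
  have hex : ∀ a : Fin m, ∃ b : Fin m, σ b = τ a := by
    intro a
    have : τ a ∈ Finset.image σ Finset.univ := by
      rw [← himeq]; exact Finset.mem_image_of_mem τ (Finset.mem_univ a)
    obtain ⟨b, _, hb⟩ := Finset.mem_image.mp this
    exact ⟨b, hb⟩
  set g : Fin m → Fin m := fun a => (hex a).choose with hg
  have hgspec : ∀ a, σ (g a) = τ a := fun a => (hex a).choose_spec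
  have hginj : Function.Injective g := by
    intro a b hab
    apply hτ
    rw [← hgspec a, ← hgspec b, hab]
  have hgbij : Function.Bijective g := (Finite.injective_iff_bijective).mp hginj
  let e : Equiv.Perm (Fin m) := Equiv.ofBijective g hgbij
  have hτeq : τ = σ ∘ e := by
    funext a
    exact (hgspec a).symm
  rw [hτeq]
  rcases cochain_perm hf e σ with h | h <;> rw [h]
  · exact hσne
  · simpa using hσne

lemma card_of_support {m : ℕ} {f : (Fin m → Fin N) → R}
    {A : Finset (Fin N)} (hA : A ∈ cochainSupport f) : A.card = m := by
  obtain ⟨σ, hσinj, hσim, _⟩ := hA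
  rw [← hσim, Finset.card_image_of_injective _ hσinj, Finset.card_univ, Fintype.card_fin]

end Aux

section Facet

variable {N j : ℕ} {R : Type} [AddCommGroup R] {G : Set (Finset (Fin N))}

/-- In a `(j+2)`-set `L ∈ G`, a cocycle cannot have exactly one support facet. -/
lemma exists_other_facet
    {f : (Fin (j + 1) → Fin N) → R} (hf : IsCocycle G (j + 1) f)
    {L A : Finset (Fin N)} (hL : L ∈ G) (hLcard : L.card = j + 2)
    (hA : A ∈ cochainSupport f) (hAL : A ⊆ L) :
    ∃ B ∈ cochainSupport f, B ⊆ L ∧ B ≠ A := by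
  by_contra hcon
  push_neg at hcon
  -- an ordered enumeration of L
  set σ : Fin (j + 2) → Fin N := fun i => ((L.orderIsoOfFin hLcard) i : Fin N) with hσdef
  have hσinj : Function.Injective σ :=
    Subtype.val_injective.comp (L.orderIsoOfFin hLcard).injective
  have hσmem : ∀ i, σ i ∈ L := fun i => ((L.orderIsoOfFin hLcard) i).2
  have hσim : Finset.image σ Finset.univ = L := by
    apply Finset.eq_of_subset_of_card_le
    · intro x hx
      obtain ⟨i, _, hi⟩ := Finset.mem_image.mp hx
      rw [← hi]; exact hσmem i
    · rw [Finset.card_image_of_injective _ hσinj, Finset.card_univ, Fintype.card_fin, hLcard]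
  -- facets
  have hfacet_inj : ∀ i : Fin (j + 2), Function.Injective (σ ∘ i.succAbove) :=
    fun i => hσinj.comp (Fin.succAbove_right_injective)
  have hfacet_im : ∀ i : Fin (j + 2),
      Finset.image (σ ∘ i.succAbove) Finset.univ = L.erase (σ i) := by
    intro i
    apply Finset.eq_of_subset_of_card_le
    · intro x hx
      obtain ⟨t, _, ht⟩ := Finset.mem_image.mp hx
      rw [← ht]
      refine Finset.mem_erase.mpr ⟨?_, hσmem _⟩
      intro h
      exact Fin.succAbove_ne i t (hσinj h)
    · rw [Finset.card_image_of_injective _ (hfacet_inj i), Finset.card_univ,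
        Fintype.card_fin, Finset.card_erase_of_mem (hσmem i), hLcard]
      omega
  -- the missing vertex of A
  have hAcard : A.card = j + 1 := card_of_support hA
  have hAssL : A ⊂ L := hAL.ssubset_of_ne (by
    intro h; rw [h, hLcard] at hAcard; omega)
  obtain ⟨x, hxL, hxA⟩ := Finset.exists_of_ssubset hAssL
  obtain ⟨i₀, _, hi₀⟩ := Finset.mem_image.mp (hσim ▸ hxL)
  have hAeq : A = L.erase x := by
    apply Finset.eq_of_subset_of_card_le
    · exact Finset.subset_erase.mpr ⟨hAL, hxA⟩
    · rw [Finset.card_erase_of_mem hxL, hLcard, hAcard]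
      omega
  have hf0 : f (σ ∘ i₀.succAbove) ≠ 0 := by
    apply support_ne_zero hf.1 hA (hfacet_inj i₀)
    rw [hfacet_im i₀, hi₀, ← hAeq]
  -- all other facets vanish
  have hothers : ∀ i : Fin (j + 2), i ≠ i₀ → f (σ ∘ i.succAbove) = 0 := by
    intro i hi
    by_contra hne
    have hBsupp : Finset.image (σ ∘ i.succAbove) Finset.univ ∈ cochainSupport f :=
      ⟨σ ∘ i.succAbove, hfacet_inj i, rfl, hne⟩
    have hBsub : Finset.image (σ ∘ i.succAbove) Finset.univ ⊆ L := by
      rw [hfacet_im i]; exact Finset.erase_subset _ _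
    have hBA := hcon _ hBsupp hBsub
    rw [hfacet_im i, hAeq, ← hi₀] at hBA
    have hσiA : σ i ∈ L.erase (σ i₀) :=
      Finset.mem_erase.mpr ⟨fun h => hi (hσinj h), hσmem i⟩
    rw [← hBA] at hσiA
    exact (Finset.mem_erase.mp hσiA).1 rfl
  -- the cocycle condition on L
  have hord : OrdSimp G σ := ⟨hσinj, by rw [hσim]; exact hL⟩
  have hdelta := hf.2 σ hord
  rw [delta, Finset.sum_eq_single i₀ (fun i _ hi => by rw [hothers i hi, smul_zero])
    (fun h => absurd (Finset.mem_univ i₀) h)] at hdelta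
  rcases Nat.even_or_odd (i₀ : ℕ) with he | he
  · rw [he.neg_one_pow, one_smul] at hdelta
    exact hf0 hdelta
  · rw [he.neg_one_pow, neg_smul, one_smul, neg_eq_zero] at hdelta
    exact hf0 hdelta

/-- Given a support element `A ⊆ K` and a vertex `v ∈ K \ A`, there is another
support element inside `insert v A` containing `v`. -/
lemma exists_support_with_vertex {d : ℕ}
    (hG : IsDComplex d G)
    {f : (Fin (j + 1) → Fin N) → R} (hf : IsCocycle G (j + 1) f)
    {K A : Finset (Fin N)} (hK : K ∈ G)
    (hA : A ∈ cochainSupport f) (hAK : A ⊆ K)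
    {v : Fin N} (hvK : v ∈ K) (hvA : v ∉ A) :
    ∃ B ∈ cochainSupport f, B ⊆ insert v A ∧ v ∈ B ∧ B ≠ A := by
  have hAcard : A.card = j + 1 := card_of_support hA
  have hLsub : insert v A ⊆ K := Finset.insert_subset hvK hAK
  have hLG : insert v A ∈ G :=
    hG.1.2.2 K hK _ hLsub (Finset.insert_nonempty v A)
  have hLcard : (insert v A).card = j + 2 := by
    rw [Finset.card_insert_of_notMem hvA, hAcard]
  obtain ⟨B, hBsupp, hBL, hBA⟩ :=
    exists_other_facet hf hLG hLcard hA (Finset.subset_insert v A)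
  refine ⟨B, hBsupp, hBL, ?_, hBA⟩
  by_contra hvB
  apply hBA
  apply Finset.eq_of_subset_of_card_le
  · intro x hx
    rcases Finset.mem_insert.mp (hBL hx) with h | h
    · exact absurd (h ▸ hx) hvB
    · exact h
  · rw [hAcard, card_of_support hBsupp]

end Facet

/-- **Structure of supports of cocycles within a simplex** (Lemma 4.5). Let `f` be a
`j`-cocycle with support `S` in a `d`-complex `G`, and `K` a `k`-simplex of `G` with
`j+1 ≤ k ≤ d`. Then (i) `S_K = ∅`, or `|S_K| ≥ k-j+1` and `⋃ S_K = K`;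
(ii) if `|S_K| = k-j+1` then `S_K` is a `j`-flower in `K`. -/
theorem cocycle_support_structure
    (d j N : ℕ) (hd : 2 ≤ d) (hj : 1 ≤ j) (hjd : j ≤ d - 1)
    (R : Type) [AddCommGroup R] [Nontrivial R]
    (G : Set (Finset (Fin N))) (hG : IsDComplex d G)
    (f : (Fin (j + 1) → Fin N) → R) (hf : IsCocycle G (j + 1) f)
    (k : ℕ) (hk1 : j + 1 ≤ k) (hk2 : k ≤ d)
    (K : Finset (Fin N)) (hK : K ∈ G) (hKcard : K.card = k + 1) :
    (({A ∈ cochainSupport f | A ⊆ K} = (∅ : Set (Finset (Fin N)))) ∨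
      (k - j + 1 ≤ {A ∈ cochainSupport f | A ⊆ K}.ncard ∧
        (⋃ A ∈ {A ∈ cochainSupport f | A ⊆ K}, (A : Set (Fin N))) = (K : Set (Fin N)))) ∧
    ({A ∈ cochainSupport f | A ⊆ K}.ncard = k - j + 1 →
      ∃ C : Finset (Fin N), C ⊆ K ∧ C.card = j ∧
        {A ∈ cochainSupport f | A ⊆ K} = flower K C) := by
  classical
  set S : Set (Finset (Fin N)) := {A ∈ cochainSupport f | A ⊆ K} with hSdef
  set T : Finset (Finset (Fin N)) := K.powerset.filter (· ∈ cochainSupport f) with hTdef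
  have hmemT : ∀ A, A ∈ T ↔ A ∈ cochainSupport f ∧ A ⊆ K := by
    intro A
    simp [hTdef, Finset.mem_filter, Finset.mem_powerset, and_comm]
  have hST : S = ↑T := by
    ext A
    simp [hSdef, hmemT A, Set.mem_setOf_eq]
  have hncard : S.ncard = T.card := by rw [hST, Set.ncard_coe_finset]
  by_cases hSemp : S = ∅
  · refine ⟨Or.inl hSemp, fun hcard => absurd hcard ?_⟩
    rw [hSemp, Set.ncard_empty]
    omega
  -- S nonempty: pick A₀
  obtain ⟨A₀, hA₀⟩ := Set.nonempty_iff_ne_empty.mpr hSemp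
  obtain ⟨hA₀supp, hA₀K⟩ := hA₀
  have hA₀card : A₀.card = j + 1 := card_of_support hA₀supp
  -- choice of petals
  have hch : ∀ v : Fin N, v ∈ K \ A₀ →
      ∃ B, B ∈ cochainSupport f ∧ B ⊆ insert v A₀ ∧ v ∈ B ∧ B ≠ A₀ := by
    intro v hv
    obtain ⟨hvK, hvA⟩ := Finset.mem_sdiff.mp hv
    obtain ⟨B, h1, h2, h3, h4⟩ := exists_support_with_vertex hG hf hK hA₀supp hA₀K hvK hvA
    exact ⟨B, h1, h2, h3, h4⟩
  set g : Fin N → Finset (Fin N) :=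
    fun v => if h : v ∈ K \ A₀ then (hch v h).choose else ∅ with hgdef
  have hgP : ∀ v ∈ K \ A₀, g v ∈ cochainSupport f ∧ g v ⊆ insert v A₀ ∧ v ∈ g v ∧ g v ≠ A₀ := by
    intro v h
    simp only [hgdef, dif_pos h]
    exact (hch v h).choose_spec
  have hgK : ∀ v ∈ K \ A₀, g v ⊆ K := by
    intro v hv
    refine (hgP v hv).2.1.trans (Finset.insert_subset (Finset.mem_sdiff.mp hv).1 hA₀K)
  have hgmemS : ∀ v ∈ K \ A₀, g v ∈ S := by
    intro v hv
    exact ⟨(hgP v hv).1, hgK v hv⟩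
  have hginj : Set.InjOn g ↑(K \ A₀) := by
    intro v hv w hw hvw
    by_contra hne
    have hvmem : v ∈ g v := (hgP v hv).2.2.1
    have hvw' : v ∈ g w := hvw ▸ hvmem
    have := (hgP w hw).2.1 hvw'
    rcases Finset.mem_insert.mp this with h | h
    · exact hne h
    · exact (Finset.mem_sdiff.mp hv).2 h
  have hKA₀card : (K \ A₀).card = k - j := by
    rw [Finset.card_sdiff_of_subset hA₀K, hKcard, hA₀card]
    omega
  set U : Finset (Finset (Fin N)) := insert A₀ ((K \ A₀).image g) with hUdef
  have hA₀notim : A₀ ∉ (K \ A₀).image g := by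
    intro h
    obtain ⟨v, hv, hveq⟩ := Finset.mem_image.mp h
    exact (hgP v hv).2.2.2 hveq
  have hUcard : U.card = k - j + 1 := by
    rw [hUdef, Finset.card_insert_of_notMem hA₀notim,
      Finset.card_image_of_injOn hginj, hKA₀card]
  have hUT : U ⊆ T := by
    intro A hA
    rcases Finset.mem_insert.mp hA with h | h
    · rw [h]; exact (hmemT A₀).mpr ⟨hA₀supp, hA₀K⟩
    · obtain ⟨v, hv, hveq⟩ := Finset.mem_image.mp h
      exact (hmemT A).mpr ⟨hveq ▸ (hgP v hv).1, hveq ▸ hgK v hv⟩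
  have hTcard : k - j + 1 ≤ T.card := hUcard ▸ Finset.card_le_card hUT
  constructor
  · -- part (i)
    right
    refine ⟨hncard ▸ hTcard, ?_⟩
    apply Set.eq_of_subset_of_subset
    · intro x hx
      simp only [Set.mem_iUnion] at hx
      obtain ⟨A, hA, hxA⟩ := hx
      exact hA.2 hxA
    · intro v hv
      have hvK : v ∈ K := hv
      by_cases hvA : v ∈ A₀
      · exact Set.mem_biUnion ⟨hA₀supp, hA₀K⟩ hvA
      · have hv' : v ∈ K \ A₀ := Finset.mem_sdiff.mpr ⟨hvK, hvA⟩
        exact Set.mem_biUnion (hgmemS v hv') ((hgP v hv').2.2.1)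
  · -- part (ii)
    intro hcard
    have hTU : T = U :=
      (Finset.eq_of_subset_of_card_le hUT (by rw [hUcard, ← hncard, hcard])).symm
    -- the structure of petals
    have hgstruct : ∀ v ∈ K \ A₀, ∀ u, u ∈ A₀ → u ∉ g v →
        g v = insert v (A₀.erase u) := by
      intro v hv u huA hug
      obtain ⟨hvK, hvA⟩ := Finset.mem_sdiff.mp hv
      have hgcard : (g v).card = j + 1 := card_of_support (hgP v hv).1
      apply Finset.eq_of_subset_of_card_le
      · intro x hx
        rcases Finset.mem_insert.mp ((hgP v hv).2.1 hx) with h | h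
        · exact Finset.mem_insert.mpr (Or.inl h)
        · refine Finset.mem_insert.mpr (Or.inr (Finset.mem_erase.mpr ⟨?_, h⟩))
          intro hxu
          exact hug (hxu ▸ hx)
      · rw [hgcard, Finset.card_insert_of_notMem
          (fun h => hvA (Finset.erase_subset _ _ h)),
          Finset.card_erase_of_mem huA, hA₀card]
        omega
    have huex : ∀ v ∈ K \ A₀, ∃ u, u ∈ A₀ ∧ u ∉ g v := by
      intro v hv
      by_contra hcon
      push_neg at hcon
      have hsub : A₀ ⊆ g v := fun u hu => hcon u hu
      have : A₀ = g v := Finset.eq_of_subset_of_card_le hsub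
        (by rw [card_of_support (hgP v hv).1, hA₀card])
      exact (hgP v hv).2.2.2 this.symm
    -- pick v₀ and u₀
    have hKA₀ne : (K \ A₀).Nonempty := by
      rw [← Finset.card_pos, hKA₀card]; omega
    obtain ⟨v₀, hv₀⟩ := hKA₀ne
    obtain ⟨u₀, hu₀A, hu₀g⟩ := huex v₀ hv₀
    set C : Finset (Fin N) := A₀.erase u₀ with hCdef
    have hCK : C ⊆ K := (Finset.erase_subset _ _).trans hA₀K
    have hCcard : C.card = j := by
      rw [hCdef, Finset.card_erase_of_mem hu₀A, hA₀card]
      omega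
    have hA₀eq : A₀ = insert u₀ C := (Finset.insert_erase hu₀A).symm
    -- all petals have centre C
    have hsame : ∀ v ∈ K \ A₀, g v = insert v C := by
      intro v hv
      obtain ⟨hvK, hvA⟩ := Finset.mem_sdiff.mp hv
      by_cases hu₀v : u₀ ∉ g v
      · exact hgstruct v hv u₀ hu₀A hu₀v
      push_neg at hu₀v
      exfalso
      obtain ⟨u, huA, hug⟩ := huex v hv
      have huu₀ : u ≠ u₀ := fun h => hug (h ▸ hu₀v)
      have hvv₀ : v ≠ v₀ := by
        intro h
        exact hu₀g (h ▸ hu₀v)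
      -- build the bad (j+2)-set L
      have hv₀g : v₀ ∉ g v := by
        intro h
        rcases Finset.mem_insert.mp ((hgP v hv).2.1 h) with h' | h'
        · exact hvv₀ h'.symm
        · exact (Finset.mem_sdiff.mp hv₀).2 h'
      set L : Finset (Fin N) := insert v₀ (g v) with hLdef
      have hLK : L ⊆ K := Finset.insert_subset (Finset.mem_sdiff.mp hv₀).1 (hgK v hv)
      have hLG : L ∈ G := hG.1.2.2 K hK L hLK (Finset.insert_nonempty _ _)
      have hLcard : L.card = j + 2 := by
        rw [hLdef, Finset.card_insert_of_notMem hv₀g, card_of_support (hgP v hv).1]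
      obtain ⟨B', hB'supp, hB'L, hB'ne⟩ :=
        exists_other_facet hf hLG hLcard (hgP v hv).1 (Finset.subset_insert _ _)
      have hB'T : B' ∈ T := (hmemT B').mpr ⟨hB'supp, hB'L.trans hLK⟩
      rw [hTU] at hB'T
      have huL : u ∉ L := by
        intro h
        rcases Finset.mem_insert.mp h with h' | h'
        · exact (Finset.mem_sdiff.mp hv₀).2 (h' ▸ huA)
        · exact hug h'
      rcases Finset.mem_insert.mp hB'T with h | h
      · -- B' = A₀ : but u ∈ A₀ and u ∉ L
        exact huL (hB'L (h ▸ huA))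
      · obtain ⟨w, hw, hweq⟩ := Finset.mem_image.mp h
        by_cases hwv : w = v
        · exact hB'ne (hweq.symm.trans (hwv ▸ rfl))
        · -- w ∈ B' ⊆ L forces w = v₀
          have hwB' : w ∈ B' := hweq ▸ (hgP w hw).2.2.1
          have hwL : w ∈ L := hB'L hwB'
          have hwv₀ : w = v₀ := by
            rcases Finset.mem_insert.mp hwL with h' | h'
            · exact h'
            · rcases Finset.mem_insert.mp ((hgP v hv).2.1 h') with h'' | h''
              · exact absurd h'' hwv
              · exact absurd h'' (Finset.mem_sdiff.mp hw).2
          -- then B' = g v₀ contains u (since u ∈ C), contradiction with u ∉ L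
          have hgv₀ : g v₀ = insert v₀ C := hgstruct v₀ hv₀ u₀ hu₀A hu₀g
          have huC : u ∈ C := Finset.mem_erase.mpr ⟨huu₀, huA⟩
          have huB' : u ∈ B' := by
            rw [← hweq, hwv₀, hgv₀]
            exact Finset.mem_insert_of_mem huC
          exact huL (hB'L huB')
    -- conclude: S is the flower with centre C
    refine ⟨C, hCK, hCcard, ?_⟩
    apply Set.eq_of_subset_of_subset
    · intro A hA
      have hAU : A ∈ U := by
        rw [← hTU]
        exact (hmemT A).mpr ⟨hA.1, hA.2⟩
      rcases Finset.mem_insert.mp hAU with h | h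
      · exact ⟨u₀, hA₀K hu₀A, Finset.notMem_erase _ _, h.trans hA₀eq⟩
      · obtain ⟨v, hv, hveq⟩ := Finset.mem_image.mp h
        refine ⟨v, (Finset.mem_sdiff.mp hv).1, ?_, ?_⟩
        · intro hvC
          exact (Finset.mem_sdiff.mp hv).2 (Finset.erase_subset _ _ hvC)
        · rw [← hveq, hsame v hv]
    · rintro P ⟨w, hwK, hwC, rfl⟩
      by_cases hwu₀ : w = u₀
      · rw [hwu₀, ← hA₀eq]
        exact ⟨hA₀supp, hA₀K⟩
      · have hwA : w ∉ A₀ := by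
          rw [hA₀eq]
          intro h
          rcases Finset.mem_insert.mp h with h' | h'
          · exact hwu₀ h'
          · exact hwC h'
        have hw' : w ∈ K \ A₀ := Finset.mem_sdiff.mpr ⟨hwK, hwA⟩
        rw [← hsame w hw']
        exact hgmemS w hw'


end RSC
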